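/- Set α' = max(1 + βK₁, γ₁). Then for every α'' > α' there exists a constant L_P'' (depending only on L_P, β, γ₁, K₁ and α'') such that for all integers n ≥ 1, all θ, θ' ∈ Θ, and every probability measure μ on X with ∫ V dμ < ∞, one has σ_β(P_θ^n μ, P_{θ'}^n μ) ≤ L_P'' |θ − θ'| (α'')^n (1 + β ∫ V dμ). -/

import Mathlib

open MeasureTheory ProbabilityTheory ENNReal

noncomputable section

namespace PoissonPaper

variable {X : Type*} [MeasurableSpace X]

/-- The weighted sup-norm `‖φ‖_β = sup_x |φ(x)| / (1 + β V(x))`, valued in `ℝ≥0∞`. -/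
def wnorm (β : ℝ) (V : X → ℝ) (φ : X → ℝ) : ℝ≥0∞ :=
  ⨆ x, ENNReal.ofReal (|φ x| / (1 + β * V x))

open Classical in
/-- The metric `d_β(x,y) = 2 + βV(x) + βV(y)` for `x ≠ y`, `0` on the diagonal. -/
def dBeta (β : ℝ) (V : X → ℝ) (x y : X) : ℝ :=
  if x = y then 0 else 2 + β * V x + β * V y

/-- The oscillation seminorm `|||φ|||_β = sup_{x ≠ y} |φ(x) - φ(y)| / d_β(x,y)`,
valued in `ℝ≥0∞`.  (For `x = y` the quotient is `0/0 = 0`, so the diagonal does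
not contribute.) -/
def osc (β : ℝ) (V : X → ℝ) (φ : X → ℝ) : ℝ≥0∞ :=
  ⨆ x, ⨆ y, ENNReal.ofReal (|φ x - φ y| / dBeta β V x y)

/-- Action of a kernel on functions: `(P*φ)(x) = ∫ φ(y) P(x,dy)`. -/
def act (P : Kernel X X) (φ : X → ℝ) : X → ℝ := fun x => ∫ y, φ y ∂(P x)

/-- Drift inequality `(P*V)(x) ≤ γ V(x) + K`, with the integral taken in the
lower-integral sense (recall `V ≥ 0`). -/
def Drift (P : Kernel X X) (V : X → ℝ) (γ K : ℝ) : Prop :=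
  ∀ x, ∫⁻ y, ENNReal.ofReal (V y) ∂(P x) ≤ ENNReal.ofReal (γ * V x + K)

instance bindIsFinite (μ : Measure X) [IsFiniteMeasure μ] (P : Kernel X X) [IsMarkovKernel P] :
    IsFiniteMeasure (μ.bind P) := by
  constructor
  rw [Measure.bind_apply MeasurableSet.univ (Kernel.measurable P).aemeasurable]
  calc ∫⁻ x, (P x) Set.univ ∂μ = ∫⁻ _, 1 ∂μ := by simp
    _ = μ Set.univ := by simp
    _ < ⊤ := measure_lt_top μ _

/-- The total variation measure `|μ₁ - μ₂|` of the difference of two finite measures. -/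
def tv (μ₁ μ₂ : Measure X) [IsFiniteMeasure μ₁] [IsFiniteMeasure μ₂] : Measure X :=
  (μ₁.toSignedMeasure - μ₂.toSignedMeasure).totalVariation

/-- `σ_β(μ₁, μ₂) = ∫ (1 + βV) d|μ₁ - μ₂|`. -/
def sigmaB (β : ℝ) (V : X → ℝ) (μ₁ μ₂ : Measure X) [IsFiniteMeasure μ₁] [IsFiniteMeasure μ₂] :
    ℝ :=
  ∫ x, (1 + β * V x) ∂(tv μ₁ μ₂)

/-- `σ_β(η) = ∫ (1 + βV) d|η|` for a finite signed measure `η`. -/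
def sigmaS (β : ℝ) (V : X → ℝ) (η : SignedMeasure X) : ℝ :=
  ∫ x, (1 + β * V x) ∂(η.totalVariation)

/-- `n`-fold iterate (power) of a kernel. -/
def kpow (P : Kernel X X) : ℕ → Kernel X X
  | 0 => Kernel.id
  | n + 1 => P ∘ₖ kpow P n

instance kpowIsMarkov (P : Kernel X X) [IsMarkovKernel P] : ∀ n, IsMarkovKernel (kpow P n)
  | 0 => by rw [kpow]; infer_instance
  | n + 1 => by have := kpowIsMarkov P n; rw [kpow]; infer_instance

/-- Action of a (Markov) kernel on finite signed measures, via the Jordan decomposition. -/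
def sbind (P : Kernel X X) [IsMarkovKernel P] (η : SignedMeasure X) : SignedMeasure X :=
  (η.toJordanDecomposition.posPart.bind P).toSignedMeasure -
    (η.toJordanDecomposition.negPart.bind P).toSignedMeasure



section Aux

variable {β γ K a : ℝ} {V : X → ℝ}

lemma jordan_pack (μ₁ μ₂ : Measure X) [IsFiniteMeasure μ₁] [IsFiniteMeasure μ₂] :
    ∃ (pos neg : Measure X) (i : Set X), MeasurableSet i ∧
      tv μ₁ μ₂ = pos + neg ∧ μ₁ + neg = μ₂ + pos ∧ pos ≤ μ₁ ∧ neg ≤ μ₂ ∧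
      pos iᶜ = 0 ∧ neg i = 0 := by
  set s := μ₁.toSignedMeasure - μ₂.toSignedMeasure with hs
  obtain ⟨i, hi₁, hi₂, hi₃, hpos, hneg⟩ := s.toJordanDecomposition_spec
  set pos := s.toJordanDecomposition.posPart with hposdef
  set neg := s.toJordanDecomposition.negPart with hnegdef
  have hposc : pos iᶜ = 0 := by
    rw [hpos, SignedMeasure.toMeasureOfZeroLE_apply s hi₂ hi₁ hi₁.compl]
    norm_num
  have hnegi : neg i = 0 := by
    rw [hneg, SignedMeasure.toMeasureOfLEZero_apply s hi₃ hi₁.compl hi₁]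
    norm_num
  have hkey : ∀ A : Set X, MeasurableSet A →
      (μ₁ A).toReal - (μ₂ A).toReal = (pos A).toReal - (neg A).toReal := by
    intro A hA
    have h1 : s A = (μ₁ A).toReal - (μ₂ A).toReal :=
      Measure.toSignedMeasure_sub_apply hA
    have h2 : s.toJordanDecomposition.toSignedMeasure A = (pos A).toReal - (neg A).toReal :=
      Measure.toSignedMeasure_sub_apply hA
    rw [s.toSignedMeasure_toJordanDecomposition] at h2
    rw [← h1, ← h2]
  have hbal : μ₁ + neg = μ₂ + pos := by
    ext A hA
    simp only [Measure.add_apply]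
    have := hkey A hA
    rw [← ENNReal.toReal_eq_toReal_iff' (by finiteness) (by finiteness)]
    rw [ENNReal.toReal_add (measure_ne_top _ _) (measure_ne_top _ _),
      ENNReal.toReal_add (measure_ne_top _ _) (measure_ne_top _ _)]
    linarith
  have hbal' : ∀ A : Set X, MeasurableSet A → μ₁ A + neg A = μ₂ A + pos A := by
    intro A hA
    have := congrArg (fun m : Measure X => m A) hbal
    simpa [Measure.add_apply] using this
  have hple : pos ≤ μ₁ := by
    refine Measure.le_iff.mpr fun A hA => ?_
    have h0 : pos (A \ i) = 0 :=
      measure_mono_null (Set.diff_subset_iff.mpr (by simp)) hposc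
    have hAi : pos A = pos (A ∩ i) := by
      rw [← measure_inter_add_diff A hi₁, h0, add_zero]
    have h1 : neg (A ∩ i) = 0 := measure_mono_null Set.inter_subset_right hnegi
    calc pos A = pos (A ∩ i) := hAi
      _ ≤ μ₂ (A ∩ i) + pos (A ∩ i) := le_add_self
      _ = μ₁ (A ∩ i) + neg (A ∩ i) := (hbal' _ (hA.inter hi₁)).symm
      _ = μ₁ (A ∩ i) := by rw [h1, add_zero]
      _ ≤ μ₁ A := measure_mono Set.inter_subset_left
  have hnle : neg ≤ μ₂ := by
    refine Measure.le_iff.mpr fun A hA => ?_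
    have h0 : neg (A \ iᶜ) = 0 := by
      refine measure_mono_null (fun x hx => ?_) hnegi
      have : x ∈ A ∧ x ∈ i := by simpa using hx
      exact this.2
    have hAi : neg A = neg (A ∩ iᶜ) := by
      rw [← measure_inter_add_diff A hi₁.compl, h0, add_zero]
    have h1 : pos (A ∩ iᶜ) = 0 := measure_mono_null Set.inter_subset_right hposc
    calc neg A = neg (A ∩ iᶜ) := hAi
      _ ≤ μ₁ (A ∩ iᶜ) + neg (A ∩ iᶜ) := le_add_self
      _ = μ₂ (A ∩ iᶜ) + pos (A ∩ iᶜ) := hbal' _ (hA.inter hi₁.compl)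
      _ = μ₂ (A ∩ iᶜ) := by rw [h1, add_zero]
      _ ≤ μ₂ A := measure_mono Set.inter_subset_left
  exact ⟨pos, neg, i, hi₁, rfl, hbal, hple, hnle, hposc, hnegi⟩

lemma dual_le (hV : Measurable V) (hf0 : ∀ x, 0 ≤ 1 + β * V x)
    (μ₁ μ₂ : Measure X) [IsFiniteMeasure μ₁] [IsFiniteMeasure μ₂]
    (h₁ : Integrable (fun x => 1 + β * V x) μ₁) (h₂ : Integrable (fun x => 1 + β * V x) μ₂)
    (c : ℝ) (g : X → ℝ) (hg : Measurable g) (hgf : ∀ x, |g x| ≤ c * (1 + β * V x)) :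
    (∫ x, g x ∂μ₁) - ∫ x, g x ∂μ₂ ≤ c * sigmaB β V μ₁ μ₂ := by
  obtain ⟨pos, neg, i, hi₁, htv, hbal, hple, hnle, hposc, hnegi⟩ := jordan_pack μ₁ μ₂
  haveI : IsFiniteMeasure pos := isFiniteMeasure_of_le μ₁ hple
  haveI : IsFiniteMeasure neg := isFiniteMeasure_of_le μ₂ hnle
  have hfp : Integrable (fun x => 1 + β * V x) pos := h₁.mono_measure hple
  have hfn : Integrable (fun x => 1 + β * V x) neg := h₂.mono_measure hnle
  have hgint : ∀ (ν : Measure X) [IsFiniteMeasure ν],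
      Integrable (fun x => 1 + β * V x) ν → Integrable g ν := by
    intro ν _ hf
    exact (hf.const_mul c).mono' hg.aestronglyMeasurable
      (Filter.Eventually.of_forall fun x => by simpa using hgf x)
  have hg₁ := hgint μ₁ h₁; have hg₂ := hgint μ₂ h₂
  have hgp := hgint pos hfp; have hgn := hgint neg hfn
  have key : (∫ x, g x ∂μ₁) + ∫ x, g x ∂neg = (∫ x, g x ∂μ₂) + ∫ x, g x ∂pos := by
    rw [← integral_add_measure hg₁ hgn, ← integral_add_measure hg₂ hgp, hbal]
  have hsig : sigmaB β V μ₁ μ₂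
      = (∫ x, (1 + β * V x) ∂pos) + ∫ x, (1 + β * V x) ∂neg := by
    rw [sigmaB, htv, integral_add_measure hfp hfn]
  have b1 : ∫ x, g x ∂pos ≤ ∫ x, c * (1 + β * V x) ∂pos :=
    integral_mono hgp (hfp.const_mul c) fun x => (le_abs_self _).trans (hgf x)
  have b2 : -(∫ x, g x ∂neg) ≤ ∫ x, c * (1 + β * V x) ∂neg := by
    rw [← integral_neg]
    exact integral_mono hgn.neg (hfn.const_mul c)
      fun x => (neg_le_abs _).trans (hgf x)
  have : (∫ x, g x ∂μ₁) - ∫ x, g x ∂μ₂ = (∫ x, g x ∂pos) - ∫ x, g x ∂neg := by linarith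
  rw [this, hsig]
  rw [integral_const_mul] at b1 b2
  linarith

lemma exists_dual (hV : Measurable V) (hf0 : ∀ x, 0 ≤ 1 + β * V x)
    (μ₁ μ₂ : Measure X) [IsFiniteMeasure μ₁] [IsFiniteMeasure μ₂]
    (h₁ : Integrable (fun x => 1 + β * V x) μ₁) (h₂ : Integrable (fun x => 1 + β * V x) μ₂) :
    ∃ g : X → ℝ, Measurable g ∧ (∀ x, |g x| ≤ 1 + β * V x) ∧
      sigmaB β V μ₁ μ₂ = (∫ x, g x ∂μ₁) - ∫ x, g x ∂μ₂ := by
  classical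
  obtain ⟨pos, neg, i, hi₁, htv, hbal, hple, hnle, hposc, hnegi⟩ := jordan_pack μ₁ μ₂
  haveI : IsFiniteMeasure pos := isFiniteMeasure_of_le μ₁ hple
  haveI : IsFiniteMeasure neg := isFiniteMeasure_of_le μ₂ hnle
  have hfp : Integrable (fun x => 1 + β * V x) pos := h₁.mono_measure hple
  have hfn : Integrable (fun x => 1 + β * V x) neg := h₂.mono_measure hnle
  set g : X → ℝ := i.piecewise (fun x => 1 + β * V x) (fun x => -(1 + β * V x)) with hgdef
  have hg : Measurable g :=
    Measurable.piecewise hi₁ (measurable_const.add (hV.const_mul β))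
      (measurable_const.add (hV.const_mul β)).neg
  have hgf : ∀ x, |g x| ≤ 1 + β * V x := by
    intro x
    by_cases hx : x ∈ i
    · rw [hgdef]; simp [Set.piecewise_eq_of_mem _ _ _ hx, abs_of_nonneg (hf0 x)]
    · rw [hgdef]; simp only [Set.piecewise_eq_of_notMem _ _ _ hx, abs_neg]
      simp [abs_of_nonneg (hf0 x)]
  have hgint : ∀ (ν : Measure X) [IsFiniteMeasure ν],
      Integrable (fun x => 1 + β * V x) ν → Integrable g ν := by
    intro ν _ hf
    exact hf.mono' hg.aestronglyMeasurable
      (Filter.Eventually.of_forall fun x => by simpa using hgf x)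
  have hg₁ := hgint μ₁ h₁; have hg₂ := hgint μ₂ h₂
  have hgp := hgint pos hfp; have hgn := hgint neg hfn
  have key : (∫ x, g x ∂μ₁) + ∫ x, g x ∂neg = (∫ x, g x ∂μ₂) + ∫ x, g x ∂pos := by
    rw [← integral_add_measure hg₁ hgn, ← integral_add_measure hg₂ hgp, hbal]
  have e1 : ∫ x, g x ∂pos = ∫ x, (1 + β * V x) ∂pos := by
    refine integral_congr_ae ?_
    have hae : ∀ᵐ x ∂pos, x ∈ i := by
      rw [ae_iff]
      exact measure_mono_null (fun x hx => by simpa using hx) hposc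
    filter_upwards [hae] with x hx
    exact Set.piecewise_eq_of_mem _ _ _ hx
  have e2 : ∫ x, g x ∂neg = -∫ x, (1 + β * V x) ∂neg := by
    rw [← integral_neg]
    refine integral_congr_ae ?_
    have hae : ∀ᵐ x ∂neg, x ∉ i := by
      rw [ae_iff]
      exact measure_mono_null (fun x hx => by simpa using hx) hnegi
    filter_upwards [hae] with x hx
    exact Set.piecewise_eq_of_notMem _ _ _ hx
  have hsig : sigmaB β V μ₁ μ₂
      = (∫ x, (1 + β * V x) ∂pos) + ∫ x, (1 + β * V x) ∂neg := by
    rw [sigmaB, htv, integral_add_measure hfp hfn]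
  refine ⟨g, hg, hgf, ?_⟩
  rw [hsig]
  linarith [key, e1, e2]

lemma sigma_self (μ : Measure X) [IsFiniteMeasure μ] : sigmaB β V μ μ = 0 := by
  have : tv μ μ = 0 := by
    rw [tv, sub_self, SignedMeasure.totalVariation_zero]
  rw [sigmaB, this, integral_zero_measure]

lemma sigma_nonneg (hf0 : ∀ x, 0 ≤ 1 + β * V x)
    (μ₁ μ₂ : Measure X) [IsFiniteMeasure μ₁] [IsFiniteMeasure μ₂] :
    0 ≤ sigmaB β V μ₁ μ₂ :=
  integral_nonneg hf0

lemma sigma_triangle (hV : Measurable V) (hf0 : ∀ x, 0 ≤ 1 + β * V x)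
    (μ₁ μ₂ μ₃ : Measure X) [IsFiniteMeasure μ₁] [IsFiniteMeasure μ₂] [IsFiniteMeasure μ₃]
    (h₁ : Integrable (fun x => 1 + β * V x) μ₁) (h₂ : Integrable (fun x => 1 + β * V x) μ₂)
    (h₃ : Integrable (fun x => 1 + β * V x) μ₃) :
    sigmaB β V μ₁ μ₃ ≤ sigmaB β V μ₁ μ₂ + sigmaB β V μ₂ μ₃ := by
  obtain ⟨g, hg, hgf, heq⟩ := exists_dual hV hf0 μ₁ μ₃ h₁ h₃
  have hgf' : ∀ x, |g x| ≤ 1 * (1 + β * V x) := fun x => by simpa using hgf x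
  have t1 := dual_le hV hf0 μ₁ μ₂ h₁ h₂ 1 g hg hgf'
  have t2 := dual_le hV hf0 μ₂ μ₃ h₂ h₃ 1 g hg hgf'
  rw [one_mul] at t1 t2
  linarith [heq, t1, t2]

lemma lint_ofReal_lt_top {μ : Measure X} {h : X → ℝ} (hi : Integrable h μ) :
    ∫⁻ x, ENNReal.ofReal (h x) ∂μ < ⊤ := by
  refine lt_of_le_of_lt (lintegral_mono fun x => ?_) hi.2
  rw [← ofReal_norm, Real.norm_eq_abs]
  exact ENNReal.ofReal_le_ofReal (le_abs_self _)

section drift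
variable {P : Kernel X X} [IsMarkovKernel P]
variable (hV : Measurable V) (hV0 : ∀ x, 0 ≤ V x) (hβ : 0 ≤ β)
  (hγ : 1 ≤ γ) (hK : 0 ≤ K) (hd : Drift P V γ K)
  (ha1 : 1 + β * K ≤ a) (ha2 : γ ≤ a)
include hV hV0 hβ hγ hK hd

omit hβ hγ hK in
lemma intV_kernel : ∀ x, Integrable V (P x) := by
  intro x
  refine ⟨hV.aestronglyMeasurable, ?_⟩
  rw [hasFiniteIntegral_iff_ofReal (Filter.Eventually.of_forall hV0)]
  exact lt_of_le_of_lt (hd x) ofReal_lt_top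

omit hβ in
lemma integral_V_le (x : X) : ∫ y, V y ∂(P x) ≤ γ * V x + K := by
  rw [integral_eq_lintegral_of_nonneg_ae (Filter.Eventually.of_forall hV0)
    hV.aestronglyMeasurable]
  refine ENNReal.toReal_le_of_le_ofReal ?_ (hd x)
  have := hV0 x; nlinarith

include ha1 ha2 in
lemma integral_f_le (x : X) :
    ∫ y, (1 + β * V y) ∂(P x) ≤ a * (1 + β * V x) := by
  have hVi := intV_kernel hV hV0 hd x
  rw [integral_add (integrable_const 1) (hVi.const_mul β), integral_const]
  simp only [probReal_univ, smul_eq_mul, one_mul]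
  rw [integral_const_mul]
  have h1 := integral_V_le hV hV0 hγ hK hd x
  have h2 := hV0 x
  have h3 : 0 ≤ ∫ y, V y ∂(P x) := integral_nonneg hV0
  nlinarith [mul_nonneg (mul_nonneg (sub_nonneg.mpr ha2) hβ) h2,
    mul_le_mul_of_nonneg_left h1 hβ]

include ha1 ha2 in
lemma lint_f_le (x : X) :
    ∫⁻ y, ENNReal.ofReal (1 + β * V y) ∂(P x) ≤ ENNReal.ofReal (a * (1 + β * V x)) := by
  have heq : ∀ y : X, ENNReal.ofReal (1 + β * V y)
      = 1 + ENNReal.ofReal β * ENNReal.ofReal (V y) := by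
    intro y
    rw [ENNReal.ofReal_add one_pos.le (mul_nonneg hβ (hV0 y)), ← ENNReal.ofReal_mul hβ]
    simp
  simp_rw [heq]
  rw [lintegral_add_left measurable_const, lintegral_const_mul _ hV.ennreal_ofReal]
  simp only [lintegral_const, measure_univ, mul_one]
  calc 1 + ENNReal.ofReal β * ∫⁻ y, ENNReal.ofReal (V y) ∂(P x)
      ≤ 1 + ENNReal.ofReal β * ENNReal.ofReal (γ * V x + K) := by
        gcongr; exact hd x
    _ = ENNReal.ofReal (1 + β * (γ * V x + K)) := by
        have haux : (0:ℝ) ≤ β * (γ * V x + K) := by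
          nlinarith [hV0 x, mul_nonneg hβ hK,
            mul_nonneg (mul_nonneg hβ (le_trans zero_le_one hγ)) (hV0 x)]
        rw [← ENNReal.ofReal_mul hβ, ← ENNReal.ofReal_one,
          ← ENNReal.ofReal_add zero_le_one haux]
    _ ≤ ENNReal.ofReal (a * (1 + β * V x)) := by
        refine ENNReal.ofReal_le_ofReal ?_
        nlinarith [mul_nonneg (mul_nonneg (sub_nonneg.mpr ha2) hβ) (hV0 x)]

omit hγ hK in
lemma integrable_f_kernel (x : X) : Integrable (fun y => 1 + β * V y) (P x) :=
  (integrable_const 1).add ((intV_kernel hV hV0 hd x).const_mul β)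

omit hβ in
lemma integrable_V_bind (μ : Measure X) [IsFiniteMeasure μ] (hVμ : Integrable V μ) :
    Integrable V (μ.bind P) := by
  refine ⟨hV.aestronglyMeasurable, ?_⟩
  rw [hasFiniteIntegral_iff_ofReal (Filter.Eventually.of_forall hV0)]
  rw [Measure.lintegral_bind (Kernel.measurable P).aemeasurable hV.ennreal_ofReal.aemeasurable]
  calc ∫⁻ x, ∫⁻ y, ENNReal.ofReal (V y) ∂(P x) ∂μ
      ≤ ∫⁻ x, ENNReal.ofReal (γ * V x + K) ∂μ := lintegral_mono hd
    _ < ⊤ := lint_ofReal_lt_top ((hVμ.const_mul γ).add (integrable_const K))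

section g
variable {c : ℝ} {g : X → ℝ} (hc : 0 ≤ c) (hg : Measurable g)
  (hgf : ∀ x, |g x| ≤ c * (1 + β * V x))
include hc hg hgf ha1 ha2

lemma lint_abs_g_le (x : X) :
    ∫⁻ y, ENNReal.ofReal |g y| ∂(P x) ≤ ENNReal.ofReal (c * (a * (1 + β * V x))) := by
  calc ∫⁻ y, ENNReal.ofReal |g y| ∂(P x)
      ≤ ∫⁻ y, ENNReal.ofReal c * ENNReal.ofReal (1 + β * V y) ∂(P x) := by
        refine lintegral_mono fun y => ?_
        rw [← ENNReal.ofReal_mul hc]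
        exact ENNReal.ofReal_le_ofReal (hgf y)
    _ = ENNReal.ofReal c * ∫⁻ y, ENNReal.ofReal (1 + β * V y) ∂(P x) :=
        lintegral_const_mul _ (measurable_const.add (hV.const_mul β)).ennreal_ofReal
    _ ≤ ENNReal.ofReal c * ENNReal.ofReal (a * (1 + β * V x)) := by
        gcongr; exact lint_f_le hV hV0 hβ hγ hK hd ha1 ha2 x
    _ = ENNReal.ofReal (c * (a * (1 + β * V x))) := (ENNReal.ofReal_mul hc).symm

omit ha1 ha2 hγ hK in
lemma integrable_g_kernel (x : X) : Integrable g (P x) :=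
  ((integrable_f_kernel hV hV0 hβ hd x).const_mul c).mono' hg.aestronglyMeasurable
    (Filter.Eventually.of_forall fun y => by simpa using hgf y)

lemma integral_bind_eq (μ : Measure X) [IsFiniteMeasure μ] (hVμ : Integrable V μ) :
    ∫ y, g y ∂(μ.bind P) = ∫ x, (∫ y, g y ∂(P x)) ∂μ := by
  have hcf_int : Integrable (fun x => c * (a * (1 + β * V x))) μ :=
    (((integrable_const 1).add (hVμ.const_mul β)).const_mul a).const_mul c
  set A := fun x => ∫⁻ y, ENNReal.ofReal (g y) ∂(P x) with hAdef
  set B := fun x => ∫⁻ y, ENNReal.ofReal (-g y) ∂(P x) with hBdef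
  have hA : Measurable A :=
    Measurable.lintegral_kernel_prod_right (κ := P) (f := fun _ y => ENNReal.ofReal (g y))
      (hg.ennreal_ofReal.comp measurable_snd)
  have hB : Measurable B :=
    Measurable.lintegral_kernel_prod_right (κ := P) (f := fun _ y => ENNReal.ofReal (-g y))
      (hg.neg.ennreal_ofReal.comp measurable_snd)
  have hAle : ∀ x, A x ≤ ENNReal.ofReal (c * (a * (1 + β * V x))) := fun x =>
    (lintegral_mono fun y => ENNReal.ofReal_le_ofReal (le_abs_self _)).trans
      (lint_abs_g_le hV hV0 hβ hγ hK hd ha1 ha2 hc hg hgf x)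
  have hBle : ∀ x, B x ≤ ENNReal.ofReal (c * (a * (1 + β * V x))) := fun x =>
    (lintegral_mono fun y => ENNReal.ofReal_le_ofReal (neg_le_abs _)).trans
      (lint_abs_g_le hV hV0 hβ hγ hK hd ha1 ha2 hc hg hgf x)
  have hAfin : ∫⁻ x, A x ∂μ ≠ ⊤ :=
    ((lintegral_mono hAle).trans_lt (lint_ofReal_lt_top hcf_int)).ne
  have hBfin : ∫⁻ x, B x ∂μ ≠ ⊤ :=
    ((lintegral_mono hBle).trans_lt (lint_ofReal_lt_top hcf_int)).ne
  have hgbind : Integrable g (μ.bind P) := by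
    refine ⟨hg.aestronglyMeasurable, ?_⟩
    have habs : ∀ y : X, ‖g y‖ₑ = ENNReal.ofReal |g y| := fun y => by
      rw [← ofReal_norm, Real.norm_eq_abs]
    rw [HasFiniteIntegral]
    simp_rw [habs]
    rw [Measure.lintegral_bind (Kernel.measurable P).aemeasurable hg.abs.ennreal_ofReal.aemeasurable]
    calc ∫⁻ x, ∫⁻ y, ENNReal.ofReal |g y| ∂(P x) ∂μ
        ≤ ∫⁻ x, ENNReal.ofReal (c * (a * (1 + β * V x))) ∂μ :=
          lintegral_mono (lint_abs_g_le hV hV0 hβ hγ hK hd ha1 ha2 hc hg hgf)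
      _ < ⊤ := lint_ofReal_lt_top hcf_int
  have hpt : ∀ x, ∫ y, g y ∂(P x) = (A x).toReal - (B x).toReal := fun x =>
    integral_eq_lintegral_pos_part_sub_lintegral_neg_part
      (integrable_g_kernel hV hV0 hβ hd hc hg hgf x)
  have hintA : Integrable (fun x => (A x).toReal) μ :=
    integrable_toReal_of_lintegral_ne_top hA.aemeasurable hAfin
  have hintB : Integrable (fun x => (B x).toReal) μ :=
    integrable_toReal_of_lintegral_ne_top hB.aemeasurable hBfin
  calc ∫ y, g y ∂(μ.bind P)
      = (∫⁻ y, ENNReal.ofReal (g y) ∂(μ.bind P)).toReal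
        - (∫⁻ y, ENNReal.ofReal (-g y) ∂(μ.bind P)).toReal :=
        integral_eq_lintegral_pos_part_sub_lintegral_neg_part hgbind
    _ = (∫⁻ x, A x ∂μ).toReal - (∫⁻ x, B x ∂μ).toReal := by
        rw [Measure.lintegral_bind (Kernel.measurable P).aemeasurable hg.ennreal_ofReal.aemeasurable,
          Measure.lintegral_bind (f := fun y => ENNReal.ofReal (-g y)) (Kernel.measurable P).aemeasurable
            hg.neg.ennreal_ofReal.aemeasurable]
    _ = (∫ x, (A x).toReal ∂μ) - ∫ x, (B x).toReal ∂μ := by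
        rw [integral_toReal hA.aemeasurable
            (Filter.Eventually.of_forall fun x => (hAle x).trans_lt ofReal_lt_top),
          integral_toReal hB.aemeasurable
            (Filter.Eventually.of_forall fun x => (hBle x).trans_lt ofReal_lt_top)]
    _ = ∫ x, ((A x).toReal - (B x).toReal) ∂μ := (integral_sub hintA hintB).symm
    _ = ∫ x, (∫ y, g y ∂(P x)) ∂μ :=
        integral_congr_ae (Filter.Eventually.of_forall fun x => (hpt x).symm)

omit hV hV0 hβ hγ hK hd ha1 ha2 hc hgf in
lemma Pg_measurable : Measurable (fun x => ∫ y, g y ∂(P x)) :=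
  (StronglyMeasurable.integral_kernel_prod_right (κ := P) (f := fun _ y => g y)
    (hg.stronglyMeasurable.comp_measurable measurable_snd)).measurable

lemma Pg_bound (x : X) : |∫ y, g y ∂(P x)| ≤ c * a * (1 + β * V x) := by
  have h1 : |∫ y, g y ∂(P x)| ≤ ∫ y, |g y| ∂(P x) := by
    have := norm_integral_le_integral_norm (μ := P x) g
    simpa [Real.norm_eq_abs] using this
  have h2 : ∫ y, |g y| ∂(P x) ≤ ∫ y, c * (1 + β * V y) ∂(P x) :=
    integral_mono (integrable_g_kernel hV hV0 hβ hd hc hg hgf x).abs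
      ((integrable_f_kernel hV hV0 hβ hd x).const_mul c) hgf
  have h3 : ∫ y, c * (1 + β * V y) ∂(P x) = c * ∫ y, (1 + β * V y) ∂(P x) :=
    integral_const_mul c _
  have h4 := integral_f_le hV hV0 hβ hγ hK hd ha1 ha2 x
  calc |∫ y, g y ∂(P x)| ≤ c * ∫ y, (1 + β * V y) ∂(P x) := by rw [← h3]; exact h1.trans h2
    _ ≤ c * (a * (1 + β * V x)) := mul_le_mul_of_nonneg_left h4 hc
    _ = c * a * (1 + β * V x) := by ring

end g

include ha1 ha2 in
lemma mass_bind (μ : Measure X) [IsFiniteMeasure μ] (hVμ : Integrable V μ) :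
    ∫ x, (1 + β * V x) ∂(μ.bind P) ≤ a * ∫ x, (1 + β * V x) ∂μ := by
  have hf0 : ∀ x, 0 ≤ 1 + β * V x := fun x => by nlinarith [hV0 x, mul_nonneg hβ (hV0 x)]
  have hgf : ∀ x, |(1 + β * V x)| ≤ 1 * (1 + β * V x) := fun x => by
    rw [one_mul, abs_of_nonneg (hf0 x)]
  have hmeas : Measurable (fun x => 1 + β * V x) := measurable_const.add (hV.const_mul β)
  rw [integral_bind_eq hV hV0 hβ hγ hK hd ha1 ha2 zero_le_one hmeas hgf μ hVμ]
  have hPfm : Measurable (fun x => ∫ y, (1 + β * V y) ∂(P x)) := Pg_measurable hmeas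
  have hPf_int : Integrable (fun x => ∫ y, (1 + β * V y) ∂(P x)) μ := by
    refine (((integrable_const 1).add (hVμ.const_mul β)).const_mul (1 * a)).mono'
      hPfm.aestronglyMeasurable (Filter.Eventually.of_forall fun x => ?_)
    have := Pg_bound hV hV0 hβ hγ hK hd ha1 ha2 zero_le_one hmeas hgf x
    rw [Real.norm_eq_abs]
    calc |∫ y, (1 + β * V y) ∂(P x)| ≤ 1 * a * (1 + β * V x) := this
      _ = 1 * a * (1 + β * V x) := rfl
  calc ∫ x, (∫ y, (1 + β * V y) ∂(P x)) ∂μ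
      ≤ ∫ x, a * (1 + β * V x) ∂μ := by
        refine integral_mono hPf_int (((integrable_const 1).add (hVμ.const_mul β)).const_mul a)
          fun x => ?_
        exact integral_f_le hV hV0 hβ hγ hK hd ha1 ha2 x
    _ = a * ∫ x, (1 + β * V x) ∂μ := integral_const_mul a _

include ha1 ha2 in
lemma sigma_contract (μ₁ μ₂ : Measure X) [IsFiniteMeasure μ₁] [IsFiniteMeasure μ₂]
    (h₁ : Integrable V μ₁) (h₂ : Integrable V μ₂) :
    sigmaB β V (μ₁.bind P) (μ₂.bind P) ≤ a * sigmaB β V μ₁ μ₂ := by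
  have hf0 : ∀ x, 0 ≤ 1 + β * V x := fun x => by nlinarith [hV0 x, mul_nonneg hβ (hV0 x)]
  have hb₁ : Integrable V (μ₁.bind P) := integrable_V_bind hV hV0 hγ hK hd μ₁ h₁
  have hb₂ : Integrable V (μ₂.bind P) := integrable_V_bind hV hV0 hγ hK hd μ₂ h₂
  have hfb₁ : Integrable (fun x => 1 + β * V x) (μ₁.bind P) :=
    (integrable_const 1).add (hb₁.const_mul β)
  have hfb₂ : Integrable (fun x => 1 + β * V x) (μ₂.bind P) :=
    (integrable_const 1).add (hb₂.const_mul β)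
  obtain ⟨g, hg, hgf, heq⟩ := exists_dual hV hf0 (μ₁.bind P) (μ₂.bind P) hfb₁ hfb₂
  have hgf' : ∀ x, |g x| ≤ 1 * (1 + β * V x) := fun x => by simpa using hgf x
  rw [heq, integral_bind_eq hV hV0 hβ hγ hK hd ha1 ha2 zero_le_one hg hgf' μ₁ h₁,
    integral_bind_eq hV hV0 hβ hγ hK hd ha1 ha2 zero_le_one hg hgf' μ₂ h₂]
  have hPgm : Measurable (fun x => ∫ y, g y ∂(P x)) := Pg_measurable hg
  have hPgb : ∀ x, |∫ y, g y ∂(P x)| ≤ a * (1 + β * V x) := fun x => by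
    have := Pg_bound hV hV0 hβ hγ hK hd ha1 ha2 zero_le_one hg hgf' x
    simpa using this
  exact dual_le hV hf0 μ₁ μ₂ ((integrable_const 1).add (h₁.const_mul β))
    ((integrable_const 1).add (h₂.const_mul β)) a _ hPgm hPgb

end drift

section twokernels
variable {P Q : Kernel X X} [IsMarkovKernel P] [IsMarkovKernel Q]
variable (hV : Measurable V) (hV0 : ∀ x, 0 ≤ V x) (hβ : 0 ≤ β)
  (hγ : 1 ≤ γ) (hK : 0 ≤ K) (hdP : Drift P V γ K) (hdQ : Drift Q V γ K)
  (ha1 : 1 + β * K ≤ a) (ha2 : γ ≤ a)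
include hV hV0 hβ hγ hK hdP hdQ ha1 ha2

lemma sigma_lipstep {c : ℝ} (hc : 0 ≤ c)
    (hPQ : ∀ x, sigmaB β V (P x) (Q x) ≤ c * (1 + β * V x))
    (μ : Measure X) [IsFiniteMeasure μ] (hVμ : Integrable V μ) :
    sigmaB β V (μ.bind P) (μ.bind Q) ≤ c * ∫ x, (1 + β * V x) ∂μ := by
  have hf0 : ∀ x, 0 ≤ 1 + β * V x := fun x => by nlinarith [hV0 x, mul_nonneg hβ (hV0 x)]
  have hbP : Integrable V (μ.bind P) := integrable_V_bind hV hV0 hγ hK hdP μ hVμ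
  have hbQ : Integrable V (μ.bind Q) := integrable_V_bind hV hV0 hγ hK hdQ μ hVμ
  obtain ⟨g, hg, hgf, heq⟩ := exists_dual hV hf0 (μ.bind P) (μ.bind Q)
    ((integrable_const 1).add (hbP.const_mul β)) ((integrable_const 1).add (hbQ.const_mul β))
  have hgf' : ∀ x, |g x| ≤ 1 * (1 + β * V x) := fun x => by simpa using hgf x
  rw [heq, integral_bind_eq hV hV0 hβ hγ hK hdP ha1 ha2 zero_le_one hg hgf' μ hVμ,
    integral_bind_eq hV hV0 hβ hγ hK hdQ ha1 ha2 zero_le_one hg hgf' μ hVμ]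
  have hPgm : Measurable (fun x => ∫ y, g y ∂(P x)) := Pg_measurable hg
  have hQgm : Measurable (fun x => ∫ y, g y ∂(Q x)) := Pg_measurable hg
  have hfint : Integrable (fun x => 1 + β * V x) μ :=
    (integrable_const 1).add (hVμ.const_mul β)
  have hPg_int : Integrable (fun x => ∫ y, g y ∂(P x)) μ :=
    (hfint.const_mul (1 * a)).mono' hPgm.aestronglyMeasurable
      (Filter.Eventually.of_forall fun x => by
        rw [Real.norm_eq_abs]
        exact Pg_bound hV hV0 hβ hγ hK hdP ha1 ha2 zero_le_one hg hgf' x)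
  have hQg_int : Integrable (fun x => ∫ y, g y ∂(Q x)) μ :=
    (hfint.const_mul (1 * a)).mono' hQgm.aestronglyMeasurable
      (Filter.Eventually.of_forall fun x => by
        rw [Real.norm_eq_abs]
        exact Pg_bound hV hV0 hβ hγ hK hdQ ha1 ha2 zero_le_one hg hgf' x)
  rw [← integral_sub hPg_int hQg_int]
  calc ∫ x, ((∫ y, g y ∂(P x)) - ∫ y, g y ∂(Q x)) ∂μ
      ≤ ∫ x, c * (1 + β * V x) ∂μ := by
        refine integral_mono (hPg_int.sub hQg_int) (hfint.const_mul c) fun x => ?_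
        have hd1 := dual_le hV hf0 (P x) (Q x)
          (integrable_f_kernel hV hV0 hβ hdP x) (integrable_f_kernel hV hV0 hβ hdQ x)
          1 g hg hgf'
        rw [one_mul] at hd1
        exact hd1.trans (hPQ x)
    _ = c * ∫ x, (1 + β * V x) ∂μ := integral_const_mul c _

end twokernels

lemma bind_kpow_succ (P : Kernel X X) [IsMarkovKernel P] (μ : Measure X) (n : ℕ) :
    μ.bind (kpow P (n + 1)) = (μ.bind (kpow P n)).bind P := by
  have h1 : ⇑(kpow P (n + 1)) = fun x => ((kpow P n) x).bind P := by
    funext x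
    rw [kpow, Kernel.comp_apply]
  rw [h1, ← Measure.bind_bind (Kernel.measurable _).aemeasurable (Kernel.measurable P).aemeasurable]

lemma bind_kpow_zero (P : Kernel X X) [IsMarkovKernel P] (μ : Measure X) :
    μ.bind (kpow P 0) = μ := by
  have h1 : ⇑(kpow P 0) = fun x => Measure.dirac x := by
    funext x
    rw [kpow, Kernel.id_apply]
  rw [h1]
  exact Measure.bind_dirac

lemma sigmaB_congr {μ₁ μ₂ ν₁ ν₂ : Measure X} [IsFiniteMeasure μ₁] [IsFiniteMeasure μ₂]
    [IsFiniteMeasure ν₁] [IsFiniteMeasure ν₂] (h₁ : μ₁ = ν₁) (h₂ : μ₂ = ν₂) :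
    sigmaB β V μ₁ μ₂ = sigmaB β V ν₁ ν₂ := by
  subst h₁; subst h₂; rfl

lemma aux_nrn {r : ℝ} (h0 : 0 ≤ r) (h1 : r < 1) (n : ℕ) : (n : ℝ) * r ^ n ≤ (1 - r)⁻¹ := by
  have h2 : 0 < 1 - r := by linarith
  have hsum : (n : ℝ) * r ^ n ≤ ∑ k ∈ Finset.range n, r ^ k := by
    calc (n : ℝ) * r ^ n = ∑ _k ∈ Finset.range n, r ^ n := by
          rw [Finset.sum_const, Finset.card_range, nsmul_eq_mul]
      _ ≤ ∑ k ∈ Finset.range n, r ^ k := by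
          refine Finset.sum_le_sum fun k hk => ?_
          exact pow_le_pow_of_le_one h0 h1.le (Finset.mem_range.mp hk).le
  refine hsum.trans ?_
  rw [geom_sum_eq (by linarith : r ≠ 1)]
  have hrw : (r ^ n - 1) / (r - 1) = (1 - r ^ n) / (1 - r) := by
    rw [← neg_div_neg_eq]; ring_nf
  rw [hrw, div_le_iff₀ h2, inv_mul_cancel₀ h2.ne']
  nlinarith [pow_nonneg h0 n]

end Aux

/-- Lipschitz continuity in the parameter of the iterated kernels under
the one-step growth condition only, with geometric loss `(α'')^n`. -/
theorem iterated_kernel_lipschitz_growth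
    {X : Type*} [MeasurableSpace X] {k : ℕ} {Θ : Set (EuclideanSpace ℝ (Fin k))}
    (hΘ : Θ.Nonempty) (P : Θ → Kernel X X) [∀ θ, IsMarkovKernel (P θ)]
    (V : X → ℝ) (hVmeas : Measurable V) (hV0 : ∀ x, 0 ≤ V x)
    (β : ℝ) (hβ : 0 < β)
    (γ₁ K₁ : ℝ) (hγ₁ : 1 < γ₁) (hK₁ : 0 ≤ K₁) (hgrow : ∀ θ, Drift (P θ) V γ₁ K₁)
    (L_P : ℝ)
    (hlip : ∀ θ θ' : Θ, ∀ x,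
      sigmaB β V ((P θ) x) ((P θ') x) ≤ L_P * ‖θ.1 - θ'.1‖ * (1 + β * V x))
    (α' : ℝ) (hα' : α' = max (1 + β * K₁) γ₁) :
    ∀ α'' : ℝ, α' < α'' →
      ∃ L_P'' : ℝ, ∀ n : ℕ, 1 ≤ n → ∀ θ θ' : Θ,
        ∀ (μ : Measure X) [IsProbabilityMeasure μ], Integrable V μ →
        sigmaB β V (μ.bind (kpow (P θ) n)) (μ.bind (kpow (P θ') n)) ≤
          L_P'' * ‖θ.1 - θ'.1‖ * α'' ^ n * (1 + β * ∫ x, V x ∂μ) := by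
  intro α'' hα''
  have hγ : (1:ℝ) ≤ γ₁ := hγ₁.le
  have hα'1 : 1 < α' := by rw [hα']; exact lt_of_lt_of_le hγ₁ (le_max_right _ _)
  have ha1 : 1 + β * K₁ ≤ α' := hα' ▸ le_max_left _ _
  have ha2 : γ₁ ≤ α' := hα' ▸ le_max_right _ _
  have hα''1 : 1 < α'' := lt_trans hα'1 hα''
  have hα''0 : (0:ℝ) < α'' := by linarith
  set r : ℝ := α' / α'' with hrdef
  have h0r : 0 ≤ r := div_nonneg (by linarith) hα''0.le
  have hr1 : r < 1 := (div_lt_one hα''0).mpr hα''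
  have hf0 : ∀ x, 0 ≤ 1 + β * V x := fun x => by nlinarith [hV0 x, mul_nonneg hβ.le (hV0 x)]
  refine ⟨max L_P 0 * (1 - r)⁻¹, ?_⟩
  intro n hn θ θ' μ hμprob hVμ
  have hVn : ∀ (ϑ : Θ) (m : ℕ), Integrable V (μ.bind (kpow (P ϑ) m)) := by
    intro ϑ m
    induction m with
    | zero => rw [bind_kpow_zero]; exact hVμ
    | succ m ih =>
      rw [bind_kpow_succ]
      exact integrable_V_bind hVmeas hV0 hγ hK₁ (hgrow ϑ) _ ih
  set M : ℝ := ∫ x, (1 + β * V x) ∂μ with hMdef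
  have hM0 : 0 ≤ M := integral_nonneg hf0
  have hmass : ∀ (ϑ : Θ) (m : ℕ),
      ∫ x, (1 + β * V x) ∂(μ.bind (kpow (P ϑ) m)) ≤ α' ^ m * M := by
    intro ϑ m
    induction m with
    | zero => rw [bind_kpow_zero, pow_zero, one_mul]
    | succ m ih =>
      rw [bind_kpow_succ]
      calc ∫ x, (1 + β * V x) ∂((μ.bind (kpow (P ϑ) m)).bind (P ϑ))
          ≤ α' * ∫ x, (1 + β * V x) ∂(μ.bind (kpow (P ϑ) m)) :=
            mass_bind hVmeas hV0 hβ.le hγ hK₁ (hgrow ϑ) ha1 ha2 _ (hVn ϑ m)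
        _ ≤ α' * (α' ^ m * M) := mul_le_mul_of_nonneg_left ih (by linarith)
        _ = α' ^ (m + 1) * M := by ring
  set c : ℝ := max L_P 0 * ‖θ.1 - θ'.1‖ with hcdef
  have hc0 : 0 ≤ c := mul_nonneg (le_max_right _ _) (norm_nonneg _)
  have hPQ : ∀ x, sigmaB β V ((P θ) x) ((P θ') x) ≤ c * (1 + β * V x) := by
    intro x
    refine (hlip θ θ' x).trans ?_
    have h := mul_nonneg (mul_nonneg (sub_nonneg.mpr (le_max_left L_P 0)) (norm_nonneg
      (θ.1 - θ'.1))) (hf0 x)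
    rw [hcdef]; nlinarith [h]
  have main : ∀ m : ℕ, sigmaB β V (μ.bind (kpow (P θ) m)) (μ.bind (kpow (P θ') m)) ≤
      c * m * α' ^ m * M := by
    intro m
    induction m with
    | zero =>
      rw [sigmaB_congr (bind_kpow_zero (P θ) μ) (bind_kpow_zero (P θ') μ), sigma_self]
      simp
    | succ m ih =>
      rw [sigmaB_congr (bind_kpow_succ (P θ) μ m) (bind_kpow_succ (P θ') μ m)]
      set ν := μ.bind (kpow (P θ) m) with hνdef
      set ν' := μ.bind (kpow (P θ') m) with hν'def
      have hfν : Integrable (fun x => 1 + β * V x) (ν.bind (P θ)) :=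
        (integrable_const 1).add
          ((integrable_V_bind hVmeas hV0 hγ hK₁ (hgrow θ) ν (hVn θ m)).const_mul β)
      have hfν'P : Integrable (fun x => 1 + β * V x) (ν'.bind (P θ)) :=
        (integrable_const 1).add
          ((integrable_V_bind hVmeas hV0 hγ hK₁ (hgrow θ) ν' (hVn θ' m)).const_mul β)
      have hfν'Q : Integrable (fun x => 1 + β * V x) (ν'.bind (P θ')) :=
        (integrable_const 1).add
          ((integrable_V_bind hVmeas hV0 hγ hK₁ (hgrow θ') ν' (hVn θ' m)).const_mul β)
      have tri := sigma_triangle hVmeas hf0 (ν.bind (P θ)) (ν'.bind (P θ)) (ν'.bind (P θ'))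
        hfν hfν'P hfν'Q
      have t1 : sigmaB β V (ν.bind (P θ)) (ν'.bind (P θ)) ≤ α' * sigmaB β V ν ν' :=
        sigma_contract hVmeas hV0 hβ.le hγ hK₁ (hgrow θ) ha1 ha2 ν ν' (hVn θ m) (hVn θ' m)
      have t2 : sigmaB β V (ν'.bind (P θ)) (ν'.bind (P θ')) ≤ c * ∫ x, (1 + β * V x) ∂ν' :=
        sigma_lipstep hVmeas hV0 hβ.le hγ hK₁ (hgrow θ) (hgrow θ') ha1 ha2 hc0 hPQ ν'
          (hVn θ' m)
      have t3 : ∫ x, (1 + β * V x) ∂ν' ≤ α' ^ m * M := hmass θ' m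
      have hpow : α' ^ m ≤ α' ^ (m + 1) := pow_le_pow_right₀ (by linarith) (Nat.le_succ m)
      have harith : α' * (c * ↑m * α' ^ m * M) + c * (α' ^ m * M)
          ≤ c * ↑(m + 1) * α' ^ (m + 1) * M := by
        push_cast
        rw [pow_succ]
        nlinarith [mul_nonneg (mul_nonneg (mul_nonneg hc0 (pow_nonneg
          (by linarith : (0:ℝ) ≤ α') m)) hM0) (by linarith : (0:ℝ) ≤ α' - 1)]
      calc sigmaB β V (ν.bind (P θ)) (ν'.bind (P θ'))
          ≤ sigmaB β V (ν.bind (P θ)) (ν'.bind (P θ))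
            + sigmaB β V (ν'.bind (P θ)) (ν'.bind (P θ')) := tri
        _ ≤ α' * sigmaB β V ν ν' + c * ∫ x, (1 + β * V x) ∂ν' := by
            have := mul_le_mul_of_nonneg_left t3 hc0
            linarith [t1, t2]
        _ ≤ α' * (c * ↑m * α' ^ m * M) + c * (α' ^ m * M) := by
            have h1 : α' * sigmaB β V ν ν' ≤ α' * (c * ↑m * α' ^ m * M) :=
              mul_le_mul_of_nonneg_left ih (by linarith : (0:ℝ) ≤ α')
            have h2 := mul_le_mul_of_nonneg_left t3 hc0
            linarith
        _ ≤ c * ↑(m + 1) * α' ^ (m + 1) * M := harith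
  have hstep : (n : ℝ) * α' ^ n ≤ (1 - r)⁻¹ * α'' ^ n := by
    have hpoweq : α' ^ n = r ^ n * α'' ^ n := by
      rw [hrdef, div_pow, div_mul_cancel₀]
      exact pow_ne_zero n hα''0.ne'
    calc (n : ℝ) * α' ^ n = ((n : ℝ) * r ^ n) * α'' ^ n := by rw [hpoweq]; ring
      _ ≤ (1 - r)⁻¹ * α'' ^ n :=
          mul_le_mul_of_nonneg_right (aux_nrn h0r hr1 n) (pow_nonneg hα''0.le n)
  have hMeq : M = 1 + β * ∫ x, V x ∂μ := by
    rw [hMdef, integral_add (integrable_const 1) (hVμ.const_mul β), integral_const,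
      integral_const_mul]
    simp
  calc sigmaB β V (μ.bind (kpow (P θ) n)) (μ.bind (kpow (P θ') n))
      ≤ c * n * α' ^ n * M := main n
    _ = (max L_P 0 * ‖θ.1 - θ'.1‖ * M) * ((n : ℝ) * α' ^ n) := by rw [hcdef]; ring
    _ ≤ (max L_P 0 * ‖θ.1 - θ'.1‖ * M) * ((1 - r)⁻¹ * α'' ^ n) := by
        refine mul_le_mul_of_nonneg_left hstep ?_
        exact mul_nonneg (mul_nonneg (le_max_right _ _) (norm_nonneg _)) hM0
    _ = max L_P 0 * (1 - r)⁻¹ * ‖θ.1 - θ'.1‖ * α'' ^ n * M := by ring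
    _ = max L_P 0 * (1 - r)⁻¹ * ‖θ.1 - θ'.1‖ * α'' ^ n * (1 + β * ∫ x, V x ∂μ) := by
        rw [hMeq]


end PoissonPaper
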